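/- For 0 < μ < 1 and integer k ≥ 0, the right-sided Riemann–Liouville fractional derivative of order μ of the Jacobi poly-fractonomial of second kind satisfies D^μ_{ξ,1}[(1−ξ)^μ P_k^{μ,−μ}(ξ)] = (Γ(k+1+μ)/Γ(k+1)) · P_k(ξ) for ξ ∈ (−1,1), where P_k is the Legendre polynomial. -/

import Mathlib

open MeasureTheory

/-- Jacobi polynomial `P_n^{(a,b)}` via the explicit finite sum (DLMF 18.5.7). -/
noncomputable def jacobiP (n : ℕ) (a b : ℝ) (x : ℝ) : ℝ :=
  ∑ l ∈ Finset.range (n + 1),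
    (Real.Gamma ((n : ℝ) + a + 1) / (Real.Gamma ((l : ℝ) + a + 1) * (Nat.factorial (n - l)))) *
    (Real.Gamma ((n : ℝ) + b + 1) / (Real.Gamma (((n - l : ℕ) : ℝ) + b + 1) * (Nat.factorial l))) *
    ((x - 1) / 2) ^ l * ((x + 1) / 2) ^ (n - l)

/-- Right-sided Riemann–Liouville fractional derivative of order `μ ∈ (0,1)`
with upper terminal `L`. -/
noncomputable def rlDerivRight (μ L : ℝ) (v : ℝ → ℝ) (x : ℝ) : ℝ :=
  (-1 / Real.Gamma (1 - μ)) * deriv (fun y => ∫ s in y..L, v s / (s - y) ^ μ) x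

/-! ### Auxiliary development -/

lemma betaReal {a b : ℝ} (ha : 0 < a) (hb : 0 < b) :
    ∫ t in (0:ℝ)..1, t ^ (a-1) * (1-t) ^ (b-1)
      = Real.Gamma a * Real.Gamma b / Real.Gamma (a+b) := by
  have key : Complex.Gamma a * Complex.Gamma b
      = Complex.Gamma ((a:ℂ)+b) * Complex.betaIntegral a b :=
    Complex.Gamma_mul_Gamma_eq_betaIntegral (by simpa using ha) (by simpa using hb)
  have hint : Complex.betaIntegral a b
      = ((∫ t in (0:ℝ)..1, t ^ (a-1) * (1-t) ^ (b-1) : ℝ) : ℂ) := by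
    rw [Complex.betaIntegral, ← intervalIntegral.integral_ofReal]
    apply intervalIntegral.integral_congr
    intro x hx
    rw [Set.uIcc_of_le (by norm_num : (0:ℝ) ≤ 1)] at hx
    have h1 : (0:ℝ) ≤ x := hx.1
    have h2 : (0:ℝ) ≤ 1 - x := by linarith [hx.2]
    push_cast
    rw [Complex.ofReal_cpow h1, Complex.ofReal_cpow h2]
    push_cast
    ring
  rw [hint] at key
  have hG : ∀ x : ℝ, Complex.Gamma (x:ℂ) = (Real.Gamma x : ℂ) := fun x => Complex.Gamma_ofReal x
  have hab : ((a:ℂ)+b) = ((a+b : ℝ):ℂ) := by push_cast; ring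
  rw [hG a, hG b, hab, hG (a+b)] at key
  have hpos : Real.Gamma (a+b) ≠ 0 := (Real.Gamma_pos_of_pos (by linarith)).ne'
  field_simp
  rw [mul_comm]; exact_mod_cast key.symm

lemma keyInt {μ : ℝ} (hμ0 : 0 < μ) (hμ1 : μ < 1) (j : ℕ) {ξ : ℝ} (hξ : ξ < 1) :
    ∫ s in ξ..1, (1-s)^μ * (1-s)^j / (s-ξ)^μ
      = (Real.Gamma (1-μ) * Real.Gamma (μ+j+1) / Real.Gamma (j+2)) * (1-ξ)^(j+1) := by
  have hc : (0:ℝ) < 1 - ξ := by linarith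
  have hsub := intervalIntegral.integral_comp_mul_add
    (a := 0) (b := 1) (f := fun s => (1-s)^μ * (1-s)^j / (s-ξ)^μ) (c := 1-ξ) hc.ne' ξ
  simp only [mul_zero, zero_add, mul_one, sub_add_cancel, smul_eq_mul] at hsub
  have hcongr : ∫ t in (0:ℝ)..1, (1 - ((1-ξ)*t+ξ))^μ * (1 - ((1-ξ)*t+ξ))^j / (((1-ξ)*t+ξ) - ξ)^μ
      = ∫ t in (0:ℝ)..1, (1-ξ)^j * (t ^ ((1-μ)-1) * (1-t) ^ ((μ+(j:ℝ)+1)-1)) := by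
    apply intervalIntegral.integral_congr
    intro t ht
    rw [Set.uIcc_of_le (by norm_num : (0:ℝ) ≤ 1)] at ht
    have ht0 : (0:ℝ) ≤ t := ht.1
    have ht1 : (0:ℝ) ≤ 1 - t := by linarith [ht.2]
    have e1 : 1 - ((1-ξ)*t+ξ) = (1-ξ)*(1-t) := by ring
    have e2 : ((1-ξ)*t+ξ) - ξ = (1-ξ)*t := by ring
    dsimp only
    rw [e1, e2, Real.mul_rpow hc.le ht1, Real.mul_rpow hc.le ht0, mul_pow]
    rw [div_eq_mul_inv, mul_inv, ← Real.rpow_neg hc.le, ← Real.rpow_neg ht0]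
    have e3 : (1-t)^μ * (1-t)^j = (1-t) ^ ((μ+(j:ℝ)+1)-1) := by
      rw [← Real.rpow_natCast (1-t) j, ← Real.rpow_add' ht1 (by positivity)]
      norm_num
    have e4 : t ^ (-μ) = t ^ ((1-μ)-1) := by norm_num
    have e5 : (1-ξ)^μ * (1-ξ)^j * (1-ξ)^(-μ) = (1-ξ)^j := by
      rw [mul_comm ((1-ξ)^μ) _, mul_assoc, ← Real.rpow_add hc]
      simp
    calc (1-ξ)^μ * (1-t)^μ * ((1-ξ)^j * (1-t)^j) * ((1-ξ)^(-μ) * t^(-μ))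
        = ((1-ξ)^μ * (1-ξ)^j * (1-ξ)^(-μ)) * ((1-t)^μ * (1-t)^j * t^(-μ)) := by ring
      _ = (1-ξ)^j * (t ^ ((1-μ)-1) * (1-t) ^ ((μ+(j:ℝ)+1)-1)) := by rw [e3, e4, e5]; ring
  rw [hcongr] at hsub
  rw [intervalIntegral.integral_const_mul, betaReal (by linarith) (by positivity)] at hsub
  have harg : (1-μ) + (μ+(j:ℝ)+1) = (j:ℝ)+2 := by ring
  rw [harg] at hsub
  have hI : (1-ξ) * ((1-ξ)^j * (Real.Gamma (1-μ) * Real.Gamma (μ+j+1) / Real.Gamma ((j:ℝ)+2)))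
      = ∫ s in ξ..1, (1-s)^μ * (1-s)^j / (s-ξ)^μ := by
    rw [hsub, ← mul_assoc, mul_inv_cancel₀ hc.ne', one_mul]
  rw [← hI]; ring

noncomputable def jacA (k : ℕ) (a b : ℝ) (l : ℕ) : ℝ :=
  (Real.Gamma ((k : ℝ) + a + 1) / (Real.Gamma ((l : ℝ) + a + 1) * (Nat.factorial (k - l)))) *
  (Real.Gamma ((k : ℝ) + b + 1) / (Real.Gamma (((k - l : ℕ) : ℝ) + b + 1) * (Nat.factorial l)))

noncomputable def jacC (k : ℕ) (a b : ℝ) (j : ℕ) : ℝ :=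
  (-1/2 : ℝ)^j * ∑ l ∈ Finset.range (j+1), jacA k a b l * ((k-l).choose (j-l))

lemma tri (f : ℕ → ℕ → ℝ) (n : ℕ) :
    ∑ l ∈ Finset.range (n+1), ∑ m ∈ Finset.range (n+1-l), f l m
      = ∑ j ∈ Finset.range (n+1), ∑ l ∈ Finset.range (j+1), f l (j-l) := by
  induction n with
  | zero => simp
  | succ n ih =>
    have step1 : ∑ l ∈ Finset.range (n+2), ∑ m ∈ Finset.range (n+2-l), f l m
        = ∑ l ∈ Finset.range (n+2), (∑ m ∈ Finset.range (n+1-l), f l m + f l (n+1-l)) := by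
      apply Finset.sum_congr rfl
      intro l hl
      have hl' := Finset.mem_range.mp hl
      have : n+2-l = (n+1-l)+1 := by omega
      rw [this, Finset.sum_range_succ]
    rw [show n+1+1 = n+2 from rfl, step1, Finset.sum_add_distrib]
    conv_rhs => rw [Finset.sum_range_succ]
    rw [← ih]
    rw [Finset.sum_range_succ (fun l => ∑ m ∈ Finset.range (n+1-l), f l m)]
    simp only [Nat.sub_self, Finset.range_zero, Finset.sum_empty, add_zero]

lemma jacobiP_expand (k : ℕ) (a b x : ℝ) :
    jacobiP k a b x = ∑ j ∈ Finset.range (k+1), jacC k a b j * (1-x)^j := by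
  have h1 : jacobiP k a b x
      = ∑ l ∈ Finset.range (k+1), ∑ m ∈ Finset.range (k+1-l),
          jacA k a b l * ((k-l).choose m) * ((x-1)/2)^(l+m) := by
    unfold jacobiP
    apply Finset.sum_congr rfl
    intro l hl
    have hl' := Finset.mem_range.mp hl
    have hq : ((x+1)/2) = ((x-1)/2) + 1 := by ring
    rw [hq, add_pow]
    rw [show k+1-l = (k-l)+1 by omega, Finset.mul_sum]
    apply Finset.sum_congr rfl
    intro m hm
    show jacA k a b l * ((x-1)/2)^l * (((x-1)/2)^m * (1:ℝ)^(k-l-m) * ((k-l).choose m)) = _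
    rw [one_pow, pow_add]
    ring
  rw [h1, tri]
  apply Finset.sum_congr rfl
  intro j hj
  rw [jacC, Finset.mul_sum, Finset.sum_mul]
  apply Finset.sum_congr rfl
  intro l hl
  have hlj := Finset.mem_range.mp hl
  have hlx : l + (j - l) = j := by omega
  rw [hlx]
  have hx : ((x-1)/2 : ℝ) = (-1/2) * (1-x) := by ring
  rw [hx, mul_pow]
  ring

noncomputable def dp (x : ℝ) (n : ℕ) : ℝ := ∏ i ∈ Finset.range n, (x - i)

lemma dp_succ (x : ℝ) (n : ℕ) : dp x (n+1) = dp x n * (x - n) := Finset.prod_range_succ _ _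

lemma dp_zero (x : ℝ) : dp x 0 = 1 := rfl

lemma dp_pos {x : ℝ} {n : ℕ} (h : 0 < x - (n-1 : ℕ)) : 0 < dp x n := by
  apply Finset.prod_pos
  intro i hi
  have hi' := Finset.mem_range.mp hi
  have hle : i ≤ n-1 := by omega
  have : (i:ℝ) ≤ ((n-1 : ℕ):ℝ) := Nat.cast_le.mpr hle
  linarith

lemma dp_vandermonde (n : ℕ) (x y : ℝ) :
    ∑ l ∈ Finset.range (n+1), (n.choose l : ℝ) * dp x l * dp y (n-l) = dp (x+y) n := by
  induction n with
  | zero => simp [dp]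
  | succ n ih =>
    have key : ∀ l ∈ Finset.range (n+1),
        (n.choose l : ℝ) * dp x l * dp y (n-l) * (x + y - n)
          = (n.choose l : ℝ) * dp x (l+1) * dp y (n-l)
            + (n.choose l : ℝ) * dp x l * dp y ((n-l)+1) := by
      intro l hl
      have hl' := Finset.mem_range.mp hl
      rw [dp_succ, dp_succ]
      have hc : ((n:ℝ) : ℝ) = (l:ℝ) + ((n-l : ℕ):ℝ) := by
        push_cast [Nat.cast_sub (by omega : l ≤ n)]; ring
      rw [show (x + y - (n:ℝ)) = (x - l) + (y - ((n-l:ℕ):ℝ)) by rw [hc]; ring]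
      ring
    have hRHS : dp (x+y) (n+1)
        = ∑ l ∈ Finset.range (n+1), ((n.choose l : ℝ) * dp x (l+1) * dp y (n-l)
            + (n.choose l : ℝ) * dp x l * dp y ((n-l)+1)) := by
      rw [dp_succ, ← ih, Finset.sum_mul]
      exact Finset.sum_congr rfl key
    rw [hRHS, Finset.sum_add_distrib]
    rw [Finset.sum_range_succ' (fun l => ((n+1).choose l : ℝ) * dp x l * dp y (n+1-l))]
    simp only [Nat.choose_zero_right, Nat.cast_one, dp_zero, Nat.sub_zero]
    have pascal : ∀ l, ((n+1).choose (l+1) : ℝ) = (n.choose l : ℝ) + (n.choose (l+1) : ℝ) := by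
      intro l; rw [Nat.choose_succ_succ]; push_cast; ring
    have split : ∀ l ∈ Finset.range (n+1),
        ((n+1).choose (l+1) : ℝ) * dp x (l+1) * dp y (n+1-(l+1))
          = (n.choose l : ℝ) * dp x (l+1) * dp y (n-l)
            + (n.choose (l+1) : ℝ) * dp x (l+1) * dp y (n-l) := by
      intro l hl
      rw [pascal, show n+1-(l+1) = n-l by omega]; ring
    rw [Finset.sum_congr rfl split, Finset.sum_add_distrib]
    have h2 : ∑ l ∈ Finset.range (n+1), (n.choose (l+1) : ℝ) * dp x (l+1) * dp y (n-l)
          + (1:ℝ) * 1 * dp y (n+1)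
        = ∑ l ∈ Finset.range (n+1), (n.choose l : ℝ) * dp x l * dp y ((n-l)+1) := by
      have := Finset.sum_range_succ' (fun l => (n.choose l : ℝ) * dp x l * dp y (n+1-l)) (n+1)
      rw [Finset.sum_range_succ (fun l => (n.choose l : ℝ) * dp x l * dp y (n+1-l))] at this
      simp only [Nat.choose_self, Nat.choose_succ_self, Nat.cast_zero, Nat.cast_one,
        zero_mul, mul_zero, zero_mul, add_zero, Nat.choose_zero_right, dp_zero,
        Nat.sub_zero, mul_one, one_mul] at this ⊢
      have e1 : ∀ l ∈ Finset.range (n+1),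
          (n.choose l : ℝ) * dp x l * dp y (n+1-l)
            = (n.choose l : ℝ) * dp x l * dp y ((n-l)+1) := by
        intro l hl
        have hl' := Finset.mem_range.mp hl
        rw [show n+1-l = (n-l)+1 by omega]
      have e2 : ∀ l ∈ Finset.range (n+1),
          (n.choose (l+1) : ℝ) * dp x (l+1) * dp y (n+1-(l+1))
            = (n.choose (l+1) : ℝ) * dp x (l+1) * dp y (n-l) := by
        intro l hl
        rw [show n+1-(l+1) = n-l by omega]
      rw [Finset.sum_congr rfl e1] at this
      rw [Finset.sum_congr rfl e2] at this
      linarith [this]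
    linarith [h2]

lemma Gamma_dp (x : ℝ) : ∀ n : ℕ, 0 < x - n + 1 →
    Real.Gamma (x+1) = dp x n * Real.Gamma (x - n + 1) := by
  intro n
  induction n with
  | zero => intro _; simp [dp_zero]
  | succ n ih =>
    intro h
    have hn : ((n+1 : ℕ):ℝ) = (n:ℝ) + 1 := by push_cast; ring
    rw [hn] at h ⊢
    have hxn : 0 < x - n := by linarith
    have h' : 0 < x - n + 1 := by linarith
    rw [ih h', dp_succ]
    have : Real.Gamma (x - n + 1) = (x - n) * Real.Gamma (x - n) := by
      rw [Real.Gamma_add_one hxn.ne']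
    rw [this, show x - ((n:ℝ)+1) + 1 = x - n by ring]
    ring

lemma coeffId {μ : ℝ} (hμ0 : 0 ≤ μ) (hμ1 : μ < 1) (k j : ℕ) (hj : j ≤ k) :
    ∑ l ∈ Finset.range (j+1), jacA k μ (-μ) l * ((k-l).choose (j-l))
      = Real.Gamma ((k:ℝ)+μ+1) * dp ((k:ℝ)+(j:ℝ)) j
        / (Real.Gamma (μ+(j:ℝ)+1) * (Nat.factorial (k-j)) * (Nat.factorial j)) := by
  have hGj : (0:ℝ) < Real.Gamma (μ+(j:ℝ)+1) := Real.Gamma_pos_of_pos (by positivity)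
  have step : ∀ l ∈ Finset.range (j+1),
      jacA k μ (-μ) l * ((k-l).choose (j-l))
        = (Real.Gamma ((k:ℝ)+μ+1) / (Real.Gamma (μ+(j:ℝ)+1) * (Nat.factorial (k-j)) * (Nat.factorial j)))
          * ((j.choose l : ℝ) * dp ((k:ℝ)-μ) l * dp (μ+(j:ℝ)) (j-l)) := by
    intro l hl
    have hlj : l ≤ j := by have := Finset.mem_range.mp hl; omega
    have hlk : l ≤ k := le_trans hlj hj
    have e1 : Real.Gamma ((k:ℝ)+(-μ)+1) = dp ((k:ℝ)-μ) l * Real.Gamma (((k-l:ℕ):ℝ)+(-μ)+1) := by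
      have h1 : (0:ℝ) < ((k:ℝ)-μ) - l + 1 := by
        have : (l:ℝ) ≤ (k:ℝ) := Nat.cast_le.mpr hlk
        linarith
      have := Gamma_dp ((k:ℝ)-μ) l h1
      rw [show (k:ℝ)-μ+1 = (k:ℝ)+(-μ)+1 by ring] at this
      rw [this]
      congr 1
      rw [Nat.cast_sub hlk]; ring
    have e2 : Real.Gamma (μ+(j:ℝ)+1) = dp (μ+(j:ℝ)) (j-l) * Real.Gamma ((l:ℝ)+μ+1) := by
      have h1 : (0:ℝ) < (μ+(j:ℝ)) - ((j-l:ℕ):ℝ) + 1 := by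
        rw [Nat.cast_sub hlj]
        have : (0:ℝ) ≤ (l:ℝ) := Nat.cast_nonneg l
        linarith
      have := Gamma_dp (μ+(j:ℝ)) (j-l) h1
      rw [this]
      congr 1
      rw [Nat.cast_sub hlj]; ring
    have e3 : (((k-l).choose (j-l)) : ℝ)
        = (Nat.factorial (k-l) : ℝ) / ((Nat.factorial (j-l)) * (Nat.factorial (k-j))) := by
      rw [Nat.cast_choose ℝ (by omega : j-l ≤ k-l), show (k-l)-(j-l) = k-j by omega]
    have e4 : ((j.choose l) : ℝ)
        = (Nat.factorial j : ℝ) / ((Nat.factorial l) * (Nat.factorial (j-l))) := by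
      rw [Nat.cast_choose ℝ hlj]
    have hGl : (0:ℝ) < Real.Gamma ((l:ℝ)+μ+1) := Real.Gamma_pos_of_pos (by positivity)
    have hGkl : (0:ℝ) < Real.Gamma (((k-l:ℕ):ℝ)+(-μ)+1) := by
      apply Real.Gamma_pos_of_pos
      have : (0:ℝ) ≤ ((k-l:ℕ):ℝ) := Nat.cast_nonneg _
      linarith
    have hdp2 : (0:ℝ) < dp (μ+(j:ℝ)) (j-l) := by
      rcases Nat.eq_zero_or_pos (j-l) with h0 | h0
      · rw [h0, dp_zero]; norm_num
      · apply dp_pos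
        have h1 : (j-l-1) + 1 ≤ j := by omega
        have h2 : ((j-l-1:ℕ):ℝ) + 1 ≤ (j:ℝ) := by exact_mod_cast Nat.cast_le.mpr h1
        linarith
    rw [jacA, e3, e4, e1, e2]
    set G0 := Real.Gamma ((k:ℝ)+μ+1) with hsG0
    set Gl := Real.Gamma ((l:ℝ)+μ+1) with hsGl
    set Gkl := Real.Gamma (((k-l:ℕ):ℝ)+(-μ)+1) with hsGkl
    set D1 := dp ((k:ℝ)-μ) l with hsD1
    set D2 := dp (μ+(j:ℝ)) (j-l) with hsD2
    have f1 : (Nat.factorial (k-l) : ℝ) ≠ 0 := Nat.cast_ne_zero.mpr (Nat.factorial_ne_zero _)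
    have f2 : (Nat.factorial l : ℝ) ≠ 0 := Nat.cast_ne_zero.mpr (Nat.factorial_ne_zero _)
    have f3 : (Nat.factorial (j-l) : ℝ) ≠ 0 := Nat.cast_ne_zero.mpr (Nat.factorial_ne_zero _)
    have f4 : (Nat.factorial (k-j) : ℝ) ≠ 0 := Nat.cast_ne_zero.mpr (Nat.factorial_ne_zero _)
    have f5 : (Nat.factorial j : ℝ) ≠ 0 := Nat.cast_ne_zero.mpr (Nat.factorial_ne_zero _)
    field_simp
  rw [Finset.sum_congr rfl step, ← Finset.mul_sum, dp_vandermonde j ((k:ℝ)-μ) (μ+(j:ℝ)),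
    show (k:ℝ)-μ+(μ+(j:ℝ)) = (k:ℝ)+(j:ℝ) by ring]
  ring

lemma Vfinal {μ : ℝ} (hμ0 : 0 < μ) (hμ1 : μ < 1) (k j : ℕ) (hj : j ≤ k) :
    jacC k μ (-μ) j * (Real.Gamma (μ+(j:ℝ)+1) / Real.Gamma ((j:ℝ)+1))
      = (Real.Gamma ((k:ℝ)+1+μ) / Real.Gamma ((k:ℝ)+1)) * jacC k 0 0 j := by
  have hμ := coeffId hμ0.le hμ1 k j hj
  have h0 := coeffId (le_refl (0:ℝ)) (by norm_num) k j hj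
  rw [neg_zero] at h0
  rw [jacC, jacC, hμ, h0]
  have a1 : Real.Gamma ((k:ℝ)+0+1) = Real.Gamma ((k:ℝ)+1) := by norm_num
  have a2 : Real.Gamma ((0:ℝ)+(j:ℝ)+1) = Real.Gamma ((j:ℝ)+1) := by norm_num
  have a3 : Real.Gamma ((k:ℝ)+1+μ) = Real.Gamma ((k:ℝ)+μ+1) := by ring_nf
  rw [a1, a2, a3]
  have hGj : (0:ℝ) < Real.Gamma (μ+(j:ℝ)+1) := Real.Gamma_pos_of_pos (by positivity)
  have hGj1 : (0:ℝ) < Real.Gamma ((j:ℝ)+1) := Real.Gamma_pos_of_pos (by positivity)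
  have hGk1 : (0:ℝ) < Real.Gamma ((k:ℝ)+1) := Real.Gamma_pos_of_pos (by positivity)
  have f4 : (Nat.factorial (k-j) : ℝ) ≠ 0 := Nat.cast_ne_zero.mpr (Nat.factorial_ne_zero _)
  have f5 : (Nat.factorial j : ℝ) ≠ 0 := Nat.cast_ne_zero.mpr (Nat.factorial_ne_zero _)
  set G0 := Real.Gamma ((k:ℝ)+μ+1)
  set G1 := Real.Gamma (μ+(j:ℝ)+1)
  set G2 := Real.Gamma ((j:ℝ)+1)
  set G3 := Real.Gamma ((k:ℝ)+1)
  set D := dp ((k:ℝ)+(j:ℝ)) j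
  field_simp

theorem stmt1 (μ : ℝ) (hμ0 : 0 < μ) (hμ1 : μ < 1) (k : ℕ) :
    ∀ ξ ∈ Set.Ioo (-1 : ℝ) 1,
      rlDerivRight μ 1 (fun s => (1 - s) ^ μ * jacobiP k μ (-μ) s) ξ
        = (Real.Gamma ((k : ℝ) + 1 + μ) / Real.Gamma ((k : ℝ) + 1)) * jacobiP k 0 0 ξ := by
  intro ξ hξ
  obtain ⟨hξ1, hξ2⟩ := hξ
  have hG1μ : (0:ℝ) < Real.Gamma (1-μ) := Real.Gamma_pos_of_pos (by linarith)
  have hFeq : ∀ y ∈ Set.Iio (1:ℝ),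
      (∫ s in y..1, (1-s)^μ * jacobiP k μ (-μ) s / (s-y)^μ)
        = ∑ j ∈ Finset.range (k+1), jacC k μ (-μ) j *
            ((Real.Gamma (1-μ) * Real.Gamma (μ+(j:ℝ)+1) / Real.Gamma ((j:ℝ)+2)) * (1-y)^(j+1)) := by
    intro y hy
    have hy1 : y < 1 := hy
    have hint : ∀ j : ℕ, IntervalIntegrable (fun s => (1-s)^μ * (1-s)^j / (s-y)^μ) volume y 1 := by
      intro j
      have base : IntervalIntegrable (fun x : ℝ => x ^ (-μ)) volume 0 (1-y) :=
        intervalIntegral.intervalIntegrable_rpow' (by linarith)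
      have shifted := base.comp_sub_right y
      rw [zero_add, sub_add_cancel] at shifted
      have cont : ContinuousOn (fun s : ℝ => (1-s)^μ * (1-s)^j) (Set.uIcc y 1) := by
        apply ContinuousOn.mul
        · apply ContinuousOn.rpow_const (Continuous.continuousOn (by continuity))
          intro s _; exact Or.inr hμ0.le
        · exact Continuous.continuousOn (by continuity)
      have prod := shifted.mul_continuousOn cont
      rw [intervalIntegrable_iff, Set.uIoc_of_le hy1.le] at prod ⊢
      apply prod.congr_fun ?_ measurableSet_Ioc
      intro s hs
      have hsy : (0:ℝ) ≤ s - y := by have := hs.1; simp at this ⊢; linarith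
      dsimp only
      rw [Real.rpow_neg hsy, div_eq_mul_inv]
      ring
    calc ∫ s in y..1, (1-s)^μ * jacobiP k μ (-μ) s / (s-y)^μ
        = ∫ s in y..1, ∑ j ∈ Finset.range (k+1),
            jacC k μ (-μ) j * ((1-s)^μ * (1-s)^j / (s-y)^μ) := by
          apply intervalIntegral.integral_congr
          intro s _
          dsimp only
          rw [jacobiP_expand, Finset.mul_sum, Finset.sum_div]
          apply Finset.sum_congr rfl
          intro j _
          ring
      _ = ∑ j ∈ Finset.range (k+1),
            ∫ s in y..1, jacC k μ (-μ) j * ((1-s)^μ * (1-s)^j / (s-y)^μ) :=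
          intervalIntegral.integral_finset_sum (fun j _ => (hint j).const_mul _)
      _ = ∑ j ∈ Finset.range (k+1), jacC k μ (-μ) j *
            ((Real.Gamma (1-μ) * Real.Gamma (μ+(j:ℝ)+1) / Real.Gamma ((j:ℝ)+2)) * (1-y)^(j+1)) := by
          apply Finset.sum_congr rfl
          intro j _
          rw [intervalIntegral.integral_const_mul, keyInt hμ0 hμ1 j hy1]
  have hd : deriv (fun y => ∫ s in y..(1:ℝ), (1-s)^μ * jacobiP k μ (-μ) s / (s-y)^μ) ξ
      = ∑ j ∈ Finset.range (k+1), jacC k μ (-μ) j *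
          ((Real.Gamma (1-μ) * Real.Gamma (μ+(j:ℝ)+1) / Real.Gamma ((j:ℝ)+2))
            * (-((j:ℝ)+1) * (1-ξ)^j)) := by
    have hev : (fun y => ∫ s in y..(1:ℝ), (1-s)^μ * jacobiP k μ (-μ) s / (s-y)^μ)
        =ᶠ[nhds ξ] (fun y => ∑ j ∈ Finset.range (k+1), jacC k μ (-μ) j *
            ((Real.Gamma (1-μ) * Real.Gamma (μ+(j:ℝ)+1) / Real.Gamma ((j:ℝ)+2)) * (1-y)^(j+1))) :=
      Filter.eventuallyEq_of_mem (Iio_mem_nhds hξ2) hFeq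
    rw [hev.deriv_eq]
    have hder : HasDerivAt (fun y => ∑ j ∈ Finset.range (k+1), jacC k μ (-μ) j *
          ((Real.Gamma (1-μ) * Real.Gamma (μ+(j:ℝ)+1) / Real.Gamma ((j:ℝ)+2)) * (1-y)^(j+1)))
        (∑ j ∈ Finset.range (k+1), jacC k μ (-μ) j *
          ((Real.Gamma (1-μ) * Real.Gamma (μ+(j:ℝ)+1) / Real.Gamma ((j:ℝ)+2))
            * (-((j:ℝ)+1) * (1-ξ)^j))) ξ := by
      apply HasDerivAt.fun_sum
      intro j _
      have h1 : HasDerivAt (fun y : ℝ => 1 - y) (-1) ξ := by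
        simpa using (hasDerivAt_id ξ).const_sub 1
      have h2 := h1.fun_pow (j+1)
      have h3 := (h2.const_mul
        (Real.Gamma (1-μ) * Real.Gamma (μ+(j:ℝ)+1) / Real.Gamma ((j:ℝ)+2))).const_mul
        (jacC k μ (-μ) j)
      convert h3 using 1
      · rfl
      push_cast [Nat.add_sub_cancel]
      ring
    exact hder.deriv
  simp only [rlDerivRight]
  rw [hd, Finset.mul_sum, jacobiP_expand k 0 0 ξ, Finset.mul_sum]
  apply Finset.sum_congr rfl
  intro j hj
  have hjk : j ≤ k := by have := Finset.mem_range.mp hj; omega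
  have hV := Vfinal hμ0 hμ1 k j hjk
  have hΓ2 : Real.Gamma ((j:ℝ)+2) = ((j:ℝ)+1) * Real.Gamma ((j:ℝ)+1) := by
    rw [show (j:ℝ)+2 = ((j:ℝ)+1)+1 by ring, Real.Gamma_add_one (by positivity)]
  have hj1 : ((j:ℝ)+1) ≠ 0 := by positivity
  have hGj1 : Real.Gamma ((j:ℝ)+1) ≠ 0 := (Real.Gamma_pos_of_pos (by positivity)).ne'
  calc (-1/Real.Gamma (1-μ)) * (jacC k μ (-μ) j *
        ((Real.Gamma (1-μ) * Real.Gamma (μ+(j:ℝ)+1) / Real.Gamma ((j:ℝ)+2))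
          * (-((j:ℝ)+1) * (1-ξ)^j)))
      = (jacC k μ (-μ) j * (Real.Gamma (μ+(j:ℝ)+1) / Real.Gamma ((j:ℝ)+1))) * (1-ξ)^j := by
        rw [hΓ2]
        field_simp
    _ = ((Real.Gamma ((k:ℝ)+1+μ) / Real.Gamma ((k:ℝ)+1)) * jacC k 0 0 j) * (1-ξ)^j := by
        rw [hV]
    _ = Real.Gamma ((k:ℝ)+1+μ) / Real.Gamma ((k:ℝ)+1) * (jacC k 0 0 j * (1-ξ)^j) := by
        ring
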